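/- If (kᵢ) is a sequence of positive naturals and (wᵢ) ⊂ ℝ₊³ satisfies wᵢ = B(kᵢ)·wᵢ₊₁ for all i, and kᵢ → ∞, then w₂ᵢ/w₁ᵢ → 0 and w₃ᵢ/w₁ᵢ → 0 as i → ∞. -/

import Mathlib

open Matrix Filter
set_option maxHeartbeats 1000000

/-- The matrix B(k) from the paper, over the reals. -/
def Bmat (k : ℕ) : Matrix (Fin 3) (Fin 3) ℝ := !![(k : ℝ), (k : ℝ), 1; 1, 0, 0; 0, 1, 0]

theorem stmt19 (k : ℕ → ℕ) (hk : ∀ i, 1 ≤ k i) (hkinf : Tendsto k atTop atTop)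
    (w : ℕ → Fin 3 → ℝ) (hw : ∀ i j, 0 < w i j)
    (hrec : ∀ i, w i = (Bmat (k i)).mulVec (w (i + 1))) :
    Tendsto (fun i => w i 1 / w i 0) atTop (nhds 0) ∧
      Tendsto (fun i => w i 2 / w i 0) atTop (nhds 0) := by
  have h0 : ∀ i, w i 0 = (k i : ℝ) * w (i+1) 0 + (k i : ℝ) * w (i+1) 1 + w (i+1) 2 := by
    intro i
    have := congrFun (hrec i) 0
    simpa [Bmat, Matrix.mulVec, dotProduct, Fin.sum_univ_three] using this
  have h1 : ∀ i, w i 1 = w (i+1) 0 := by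
    intro i
    have := congrFun (hrec i) 1
    simpa [Bmat, Matrix.mulVec, dotProduct, Fin.sum_univ_three] using this
  have h2 : ∀ i, w i 2 = w (i+1) 1 := by
    intro i
    have := congrFun (hrec i) 2
    simpa [Bmat, Matrix.mulVec, dotProduct, Fin.sum_univ_three] using this
  have hkpos : ∀ i, (0:ℝ) < (k i : ℝ) := fun i => by
    exact_mod_cast Nat.lt_of_lt_of_le Nat.zero_lt_one (hk i)
  have hinv : Tendsto (fun i => 1 / (k i : ℝ)) atTop (nhds 0) := by
    simpa [one_div, Pi.inv_def] using
      (tendsto_natCast_atTop_atTop.comp hkinf).inv_tendsto_atTop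
  have key : ∀ (a : Fin 3) (b : Fin 3), (∀ i, w i a = w (i+1) b) →
      (∀ i, w i b ≤ w i 0 + w i 1) →
      Tendsto (fun i => w i a / w i 0) atTop (nhds 0) := by
    intro a b hab hble
    refine squeeze_zero (g := fun i => 1 / (k i : ℝ))
      (fun i => le_of_lt (div_pos (hw i a) (hw i 0))) (fun i => ?_) hinv
    rw [div_le_div_iff₀ (hw i 0) (hkpos i), one_mul, hab i, h0 i]
    have hka : (k i : ℝ) * w (i+1) b ≤
        (k i : ℝ) * w (i+1) 0 + (k i : ℝ) * w (i+1) 1 := by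
      rw [← mul_add]
      exact mul_le_mul_of_nonneg_left (hble (i+1)) (le_of_lt (hkpos i))
    nlinarith [hw (i+1) 2]
  constructor
  · exact key 1 0 h1 (fun i => le_add_of_nonneg_right (le_of_lt (hw i 1)))
  · exact key 2 1 h2 (fun i => le_add_of_nonneg_left (le_of_lt (hw i 0)))
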